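/- For the (1+1) EA on OneMax with n bits, let V_t be the fitness (number of ones) after t iterations. Then for all t ≥ 0, E[V_t] ≥ n(1 - exp(-t/(en))/2), assuming the initial search point is uniformly random so that E[V_0] = n/2. -/

import Mathlib

open Finset

/-- Number of leading ones of a bit string. -/
def leadingOnes (n : ℕ) (x : Fin n → Bool) : ℕ :=
  (Finset.univ.filter (fun i : Fin n => ∀ j ≤ i, x j = true)).card

/-- Probability that standard bit mutation (each bit flips independently with
probability `1/n`) turns `x` into `y`. -/
noncomputable def mutProb (n : ℕ) (x y : Fin n → Bool) : ℝ :=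
  ∏ i : Fin n, if y i = x i then 1 - 1 / (n : ℝ) else 1 / (n : ℝ)

/-- One-step transition probability of the (1+1) EA with fitness `f`:
the offspring is accepted iff its fitness is at least that of the parent. -/
noncomputable def eaStep (n : ℕ) (f : (Fin n → Bool) → ℕ) (x z : Fin n → Bool) : ℝ :=
  (if f x ≤ f z then mutProb n x z else 0) +
    (if z = x then ∑ y ∈ Finset.univ.filter (fun y => f y < f x), mutProb n x y else 0)

/-- Distribution of the current search point of the (1+1) EA after `t` iterations,
starting from the uniform distribution. -/
noncomputable def eaDist (n : ℕ) (f : (Fin n → Bool) → ℕ) : ℕ → (Fin n → Bool) → ℝ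
  | 0, _ => (1 / 2 : ℝ) ^ n
  | t + 1, z => ∑ x : Fin n → Bool, eaDist n f t x * eaStep n f x z


/-- Number of ones in a bit string. -/
def oneMax (n : ℕ) (x : Fin n → Bool) : ℕ :=
  (Finset.univ.filter (fun i : Fin n => x i = true)).card

lemma mutProb_nonneg {n : ℕ} (hn : 1 ≤ n) (x y : Fin n → Bool) : 0 ≤ mutProb n x y := by
  apply Finset.prod_nonneg
  intro i _
  have h1 : (1:ℝ) ≤ n := by exact_mod_cast hn
  have h2 : (1:ℝ)/n ≤ 1 := by
    rw [div_le_one (by linarith)]; exact h1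
  have h3 : 0 ≤ (1:ℝ)/n := by positivity
  split <;> linarith

lemma sum_mutProb {n : ℕ} (x : Fin n → Bool) : ∑ y : Fin n → Bool, mutProb n x y = 1 := by
  unfold mutProb
  have h := Finset.prod_univ_sum (t := fun _ : Fin n => (Finset.univ : Finset Bool))
    (f := fun i b => if b = x i then 1 - 1/(n:ℝ) else 1/n)
  rw [Fintype.piFinset_univ] at h
  rw [← h]
  apply Finset.prod_eq_one
  intro i _
  rw [Fintype.sum_bool]
  cases h : x i <;> simp

lemma eaStep_nonneg {n : ℕ} (hn : 1 ≤ n) (f : (Fin n → Bool) → ℕ) (x z : Fin n → Bool) :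
    0 ≤ eaStep n f x z := by
  unfold eaStep
  have h1 := mutProb_nonneg hn x z
  have h2 : 0 ≤ ∑ y ∈ Finset.univ.filter (fun y => f y < f x), mutProb n x y :=
    Finset.sum_nonneg fun y _ => mutProb_nonneg hn x y
  split <;> split <;> simp_all <;> linarith

lemma sum_eaStep {n : ℕ} (f : (Fin n → Bool) → ℕ) (x : Fin n → Bool) :
    ∑ z : Fin n → Bool, eaStep n f x z = 1 := by
  unfold eaStep
  rw [Finset.sum_add_distrib]
  rw [Finset.sum_ite_eq' Finset.univ x
    (fun _ => ∑ y ∈ Finset.univ.filter (fun y => f y < f x), mutProb n x y)]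
  simp only [Finset.mem_univ, if_true]
  rw [← Finset.sum_filter]
  rw [← sum_mutProb (n := n) x]
  rw [← Finset.sum_filter_add_sum_filter_not Finset.univ (fun z => f x ≤ f z) (mutProb n x)]
  congr 1
  apply Finset.sum_congr _ (fun _ _ => rfl)
  ext z
  simp [not_le]

lemma eaDist_nonneg {n : ℕ} (hn : 1 ≤ n) (f : (Fin n → Bool) → ℕ) (t : ℕ) (x : Fin n → Bool) :
    0 ≤ eaDist n f t x := by
  induction t generalizing x with
  | zero => unfold eaDist; positivity
  | succ t ih =>
    unfold eaDist
    exact Finset.sum_nonneg fun y _ => mul_nonneg (ih y) (eaStep_nonneg hn f y x)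

lemma sum_eaDist {n : ℕ} (f : (Fin n → Bool) → ℕ) (t : ℕ) :
    ∑ x : Fin n → Bool, eaDist n f t x = 1 := by
  induction t with
  | zero =>
    unfold eaDist
    rw [Finset.sum_const, Finset.card_univ, Fintype.card_fun]
    simp only [Fintype.card_fin, Fintype.card_bool, nsmul_eq_mul]
    push_cast
    rw [← mul_pow]
    norm_num
  | succ t ih =>
    unfold eaDist
    rw [Finset.sum_comm]
    calc ∑ x : Fin n → Bool, ∑ z : Fin n → Bool, eaDist n f t x * eaStep n f x z
        = ∑ x : Fin n → Bool, eaDist n f t x * ∑ z : Fin n → Bool, eaStep n f x z := by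
          simp [Finset.mul_sum]
      _ = 1 := by simp [sum_eaStep, ih]

lemma oneMax_le {n : ℕ} (x : Fin n → Bool) : oneMax n x ≤ n :=
  (Finset.card_filter_le _ _).trans (by simp)

lemma oneMax_flip {n : ℕ} {x : Fin n → Bool} {i : Fin n} (hi : x i = false) :
    oneMax n (Function.update x i true) = oneMax n x + 1 := by
  unfold oneMax
  have hset : Finset.univ.filter (fun j => Function.update x i true j = true)
      = insert i (Finset.univ.filter (fun j => x j = true)) := by
    ext j
    rcases eq_or_ne j i with rfl | h
    · simp [Function.update_self]
    · simp [Function.update_of_ne h, h]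
  rw [hset, Finset.card_insert_of_notMem (by simp [hi])]

lemma mutProb_flip {n : ℕ} {x : Fin n → Bool} {i : Fin n} (hi : x i = false) :
    mutProb n x (Function.update x i true) = 1/(n:ℝ) * (1 - 1/n)^(n-1) := by
  unfold mutProb
  rw [← Finset.mul_prod_erase Finset.univ _ (Finset.mem_univ i)]
  rw [Function.update_self, hi]
  simp only [Bool.true_eq_false, if_false]
  congr 1
  rw [Finset.prod_congr rfl (fun j hj => ?_), Finset.prod_const,
    Finset.card_erase_of_mem (Finset.mem_univ i), Finset.card_univ, Fintype.card_fin]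
  rw [Function.update_of_ne (Finset.ne_of_mem_erase hj), if_pos rfl]

lemma flip_injOn {n : ℕ} (x : Fin n → Bool) :
    Set.InjOn (fun i => Function.update x i true)
      (Finset.univ.filter (fun i => x i = false)) := by
  intro i hi j hj h
  simp only [Finset.coe_filter, Set.mem_setOf_eq] at hi hj
  by_contra hne
  have h2 := congrFun h i
  simp only [Function.update_self, Function.update_of_ne hne] at h2
  rw [hi.2] at h2
  exact Bool.noConfusion h2

lemma card_zeros {n : ℕ} (x : Fin n → Bool) :
    (Finset.univ.filter (fun i => x i = false)).card = n - oneMax n x := by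
  have h := Finset.card_filter_add_card_filter_not
    (s := (Finset.univ : Finset (Fin n))) (p := fun i => x i = true)
  simp only [Finset.card_univ, Fintype.card_fin] at h
  have h2 : Finset.univ.filter (fun i : Fin n => ¬ x i = true) =
      Finset.univ.filter (fun i => x i = false) := by
    ext i; simp
  rw [h2] at h
  unfold oneMax
  omega


lemma step_drift {n : ℕ} (hn : 1 ≤ n) (x : Fin n → Bool) :
    (oneMax n x : ℝ) + ((n:ℝ) - oneMax n x) * (1/n * (1 - 1/n)^(n-1)) ≤
      ∑ z : Fin n → Bool, eaStep n (oneMax n) x z * (oneMax n z : ℝ) := by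
  set f := oneMax n with hf
  set c : ℝ := 1/n * (1 - 1/n)^(n-1) with hc
  set A := Finset.univ.filter (fun z : Fin n → Bool => f x ≤ f z) with hA
  set B := Finset.univ.filter (fun y : Fin n → Bool => f y < f x) with hB
  set Z := Finset.univ.filter (fun i : Fin n => x i = false) with hZ
  set T := Z.image (fun i => Function.update x i true) with hT
  have hsplit : ∑ z : Fin n → Bool, eaStep n f x z * (f z : ℝ)
      = (∑ z ∈ A, mutProb n x z * (f z : ℝ)) + (∑ y ∈ B, mutProb n x y) * (f x : ℝ) := by
    unfold eaStep
    simp only [add_mul, ite_mul, zero_mul]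
    rw [Finset.sum_add_distrib]
    congr 1
    · rw [← Finset.sum_filter]
    · rw [Finset.sum_ite_eq' Finset.univ x
        (fun z => (∑ y ∈ B, mutProb n x y) * (f z : ℝ))]
      simp
  have hpart : (∑ z ∈ A, mutProb n x z) + (∑ y ∈ B, mutProb n x y) = 1 := by
    rw [← sum_mutProb (n := n) x,
      ← Finset.sum_filter_add_sum_filter_not Finset.univ (fun z => f x ≤ f z) (mutProb n x)]
    congr 1
    apply Finset.sum_congr _ (fun _ _ => rfl)
    ext z
    simp [hB, not_le]
  have hTsubA : T ⊆ A := by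
    intro z hz
    rw [hT, Finset.mem_image] at hz
    obtain ⟨i, hi, rfl⟩ := hz
    rw [hZ, Finset.mem_filter] at hi
    rw [hA, Finset.mem_filter]
    exact ⟨Finset.mem_univ _, by rw [hf, oneMax_flip hi.2]; omega⟩
  have hTsum : ∑ z ∈ T, mutProb n x z * ((f z : ℝ) - (f x : ℝ)) = ((n:ℝ) - f x) * c := by
    rw [hT, Finset.sum_image (fun i hi j hj h => flip_injOn x (Finset.mem_coe.mpr (by rwa [hZ] at hi)) (Finset.mem_coe.mpr (by rwa [hZ] at hj)) h)]
    have : ∀ i ∈ Z, mutProb n x (Function.update x i true) *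
        ((f (Function.update x i true) : ℝ) - (f x : ℝ)) = c := by
      intro i hi
      rw [hZ, Finset.mem_filter] at hi
      rw [mutProb_flip hi.2, hf, oneMax_flip hi.2]
      push_cast
      ring
    rw [Finset.sum_congr rfl this, Finset.sum_const, hZ, card_zeros, nsmul_eq_mul]
    congr 1
    rw [Nat.cast_sub (oneMax_le x)]
  have hge : ∑ z ∈ T, mutProb n x z * ((f z : ℝ) - (f x : ℝ))
      ≤ ∑ z ∈ A, mutProb n x z * ((f z : ℝ) - (f x : ℝ)) := by
    apply Finset.sum_le_sum_of_subset_of_nonneg hTsubA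
    intro z hzA _
    rw [hA, Finset.mem_filter] at hzA
    have : (f x : ℝ) ≤ f z := by exact_mod_cast hzA.2
    have := mutProb_nonneg hn x z
    nlinarith
  have hexpand : ∑ z ∈ A, mutProb n x z * (f z : ℝ)
      = (∑ z ∈ A, mutProb n x z) * (f x : ℝ)
        + ∑ z ∈ A, mutProb n x z * ((f z : ℝ) - (f x : ℝ)) := by
    rw [Finset.sum_mul, ← Finset.sum_add_distrib]
    apply Finset.sum_congr rfl
    intro z _
    ring
  rw [hsplit, hexpand]
  rw [hTsum] at hge
  nlinarith [hge, hpart]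

lemma exp_pow_bound {n : ℕ} (hn : 1 ≤ n) : Real.exp (-1) ≤ (1 - 1/(n:ℝ))^(n-1) := by
  rcases eq_or_lt_of_le hn with h1 | h2
  · rw [← h1]
    simpa using Real.exp_le_one_iff.mpr (by norm_num : (-1:ℝ) ≤ 0)
  · have hn2 : 2 ≤ n := h2
    set m : ℕ := n - 1 with hm
    have hmpos : 1 ≤ m := by omega
    have hM : (0:ℝ) < m := by exact_mod_cast hmpos
    have hNM : (m : ℝ) = (n : ℝ) - 1 := by
      rw [hm, Nat.cast_sub hn]; norm_num
    have hNpos : (0:ℝ) < n := by positivity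
    have key : Real.exp (-(1/(m:ℝ))) ≤ 1 - 1/(n:ℝ) := by
      rw [Real.exp_neg]
      have h3 : (n:ℝ)/((n:ℝ)-1) ≤ Real.exp (1/(m:ℝ)) := by
        have := Real.add_one_le_exp (1/(m:ℝ))
        have : 1 + 1/(m:ℝ) ≤ Real.exp (1/(m:ℝ)) := by linarith
        calc (n:ℝ)/((n:ℝ)-1) = 1 + 1/(m:ℝ) := by
              rw [hNM]
              have hd : (n:ℝ) - 1 ≠ 0 := by linarith [hNM ▸ hM]
              field_simp
              ring
          _ ≤ _ := this
      have hq : (0:ℝ) < (n:ℝ)/((n:ℝ)-1) := by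
        apply div_pos hNpos; linarith [hNM, hM]
      calc (Real.exp (1/(m:ℝ)))⁻¹ ≤ ((n:ℝ)/((n:ℝ)-1))⁻¹ := by
            apply inv_anti₀ hq h3
        _ = 1 - 1/(n:ℝ) := by field_simp
    calc Real.exp (-1) = Real.exp (-(1/(m:ℝ))) ^ m := by
          rw [← Real.exp_nat_mul]
          congr 1
          field_simp
      _ ≤ (1 - 1/(n:ℝ))^m := by
          apply pow_le_pow_left₀ (Real.exp_nonneg _) key

lemma sum_dist_compl {n : ℕ} :
    ∑ x : Fin n → Bool, ((n:ℝ) - oneMax n x) = n * 2^n / 2 := by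
  have hinv : Function.Involutive (fun (x : Fin n → Bool) (i : Fin n) => !(x i)) := by
    intro x; funext i; simp
  have hflip : ∀ x : Fin n → Bool, ((oneMax n (fun i => !(x i)) : ℝ)) = n - oneMax n x := by
    intro x
    have h := Finset.card_filter_add_card_filter_not
      (s := (Finset.univ : Finset (Fin n))) (p := fun i => x i = true)
    simp only [Finset.card_univ, Fintype.card_fin] at h
    have h2 : Finset.univ.filter (fun i : Fin n => ¬ x i = true) =
        Finset.univ.filter (fun i : Fin n => (!(x i)) = true) := by
      ext i; simp
    rw [h2] at h
    have : oneMax n x + oneMax n (fun i => !(x i)) = n := h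
    have hle := oneMax_le x
    push_cast [← this]
    ring
  have he : ∑ x : Fin n → Bool, ((n:ℝ) - oneMax n x)
      = ∑ x : Fin n → Bool, (oneMax n x : ℝ) := by
    rw [← Equiv.sum_comp (hinv.toPerm _) (fun x => (oneMax n x : ℝ))]
    apply Finset.sum_congr rfl
    intro x _
    rw [← hflip x]
    rfl
  have h2 : (∑ x : Fin n → Bool, ((n:ℝ) - oneMax n x))
      + ∑ x : Fin n → Bool, (oneMax n x : ℝ) = n * 2^n := by
    rw [← Finset.sum_add_distrib]
    simp [Finset.sum_const, Finset.card_univ, mul_comm]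
  linarith [he, h2]

lemma D_zero {n : ℕ} (f : (Fin n → Bool) → ℕ) :
    ∑ x : Fin n → Bool, eaDist n f 0 x * ((n:ℝ) - oneMax n x) = n / 2 := by
  show ∑ x : Fin n → Bool, (1/2:ℝ)^n * ((n:ℝ) - oneMax n x) = n / 2
  rw [← Finset.mul_sum, sum_dist_compl]
  rw [div_pow, one_pow]
  field_simp

lemma D_step {n : ℕ} (hn : 1 ≤ n) (t : ℕ) :
    ∑ z : Fin n → Bool, eaDist n (oneMax n) (t+1) z * ((n:ℝ) - oneMax n z)
      ≤ (1 - 1/n * (1 - 1/n)^(n-1)) *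
        ∑ x : Fin n → Bool, eaDist n (oneMax n) t x * ((n:ℝ) - oneMax n x) := by
  set c : ℝ := 1/n * (1 - 1/n)^(n-1) with hc
  have hstep : ∀ x : Fin n → Bool,
      ∑ z : Fin n → Bool, eaStep n (oneMax n) x z * ((n:ℝ) - oneMax n z)
        ≤ (1 - c) * ((n:ℝ) - oneMax n x) := by
    intro x
    have h1 : ∑ z : Fin n → Bool, eaStep n (oneMax n) x z * ((n:ℝ) - oneMax n z)
        = (n:ℝ) - ∑ z : Fin n → Bool, eaStep n (oneMax n) x z * (oneMax n z : ℝ) := by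
      have : ∀ z : Fin n → Bool, eaStep n (oneMax n) x z * ((n:ℝ) - oneMax n z)
          = eaStep n (oneMax n) x z * (n:ℝ) - eaStep n (oneMax n) x z * (oneMax n z : ℝ) := by
        intro z; ring
      rw [Finset.sum_congr rfl (fun z _ => this z), Finset.sum_sub_distrib,
        ← Finset.sum_mul, sum_eaStep, one_mul]
    rw [h1]
    have := step_drift hn x
    nlinarith [this]
  show ∑ z : Fin n → Bool,
      (∑ x : Fin n → Bool, eaDist n (oneMax n) t x * eaStep n (oneMax n) x z)
        * ((n:ℝ) - oneMax n z) ≤ _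
  calc ∑ z : Fin n → Bool,
      (∑ x : Fin n → Bool, eaDist n (oneMax n) t x * eaStep n (oneMax n) x z)
        * ((n:ℝ) - oneMax n z)
      = ∑ x : Fin n → Bool, eaDist n (oneMax n) t x *
          ∑ z : Fin n → Bool, eaStep n (oneMax n) x z * ((n:ℝ) - oneMax n z) := by
        simp only [Finset.sum_mul, Finset.mul_sum]
        rw [Finset.sum_comm]
        exact Finset.sum_congr rfl fun x _ => Finset.sum_congr rfl fun z _ => by ring
    _ ≤ ∑ x : Fin n → Bool, eaDist n (oneMax n) t x * ((1 - c) * ((n:ℝ) - oneMax n x)) := by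
        apply Finset.sum_le_sum
        intro x _
        exact mul_le_mul_of_nonneg_left (hstep x) (eaDist_nonneg hn _ t x)
    _ = (1 - c) * ∑ x : Fin n → Bool, eaDist n (oneMax n) t x * ((n:ℝ) - oneMax n x) := by
        rw [Finset.mul_sum]
        apply Finset.sum_congr rfl
        intro x _
        ring

lemma c_props {n : ℕ} (hn : 1 ≤ n) :
    0 ≤ 1/(n:ℝ) * (1 - 1/n)^(n-1) ∧ 1/(n:ℝ) * (1 - 1/n)^(n-1) ≤ 1 := by
  have hN : (1:ℝ) ≤ n := by exact_mod_cast hn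
  have h1 : (0:ℝ) ≤ 1 - 1/n := by
    have : (1:ℝ)/n ≤ 1 := by rw [div_le_one (by linarith)]; exact hN
    linarith
  have h2 : (1 - 1/(n:ℝ))^(n-1) ≤ 1 := pow_le_one₀ h1 (by
    have : (0:ℝ) < 1/n := by positivity
    linarith)
  have h3 : (0:ℝ) ≤ (1 - 1/(n:ℝ))^(n-1) := pow_nonneg h1 _
  have h4 : (1:ℝ)/n ≤ 1 := by rw [div_le_one (by linarith)]; exact hN
  constructor
  · positivity
  · nlinarith

lemma D_bound {n : ℕ} (hn : 1 ≤ n) (t : ℕ) :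
    ∑ x : Fin n → Bool, eaDist n (oneMax n) t x * ((n:ℝ) - oneMax n x)
      ≤ (1 - 1/n * (1 - 1/n)^(n-1))^t * (n/2) := by
  induction t with
  | zero => rw [D_zero]; simp
  | succ t ih =>
    obtain ⟨hc0, hc1⟩ := c_props hn
    calc ∑ z : Fin n → Bool, eaDist n (oneMax n) (t+1) z * ((n:ℝ) - oneMax n z)
        ≤ (1 - 1/n * (1 - 1/n)^(n-1)) *
          ∑ x : Fin n → Bool, eaDist n (oneMax n) t x * ((n:ℝ) - oneMax n x) :=
          D_step hn t
      _ ≤ (1 - 1/n * (1 - 1/n)^(n-1)) * ((1 - 1/n * (1 - 1/n)^(n-1))^t * (n/2)) :=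
          mul_le_mul_of_nonneg_left ih (by linarith)
      _ = (1 - 1/n * (1 - 1/n)^(n-1))^(t+1) * (n/2) := by ring

theorem oneMax_fixed_budget (n : ℕ) (hn : 1 ≤ n) (t : ℕ) :
    (n : ℝ) * (1 - Real.exp (-(t : ℝ) / (Real.exp 1 * n)) / 2) ≤
      ∑ x : Fin n → Bool, eaDist n (oneMax n) t x * (oneMax n x : ℝ) := by
  have hN : (1:ℝ) ≤ n := by exact_mod_cast hn
  have he1 : (1:ℝ) < Real.exp 1 := by
    have := Real.add_one_le_exp (1:ℝ); linarith
  have hen : (1:ℝ) ≤ Real.exp 1 * n := by nlinarith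
  set c : ℝ := 1/n * (1 - 1/n)^(n-1) with hc
  set c' : ℝ := 1/(Real.exp 1 * n) with hc'
  obtain ⟨hc0, hc1⟩ := c_props hn
  have hc'0 : 0 < c' := by rw [hc']; positivity
  have hc'1 : c' ≤ 1 := by rw [hc', div_le_one (by linarith)]; exact hen
  have hcc : c' ≤ c := by
    have h1 : Real.exp (-1) ≤ (1 - 1/(n:ℝ))^(n-1) := exp_pow_bound hn
    rw [Real.exp_neg] at h1
    calc c' = 1/(n:ℝ) * (Real.exp 1)⁻¹ := by rw [hc']; ring
      _ ≤ 1/(n:ℝ) * (1 - 1/n)^(n-1) := by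
          apply mul_le_mul_of_nonneg_left h1 (by positivity)
      _ = c := hc.symm
  have hpow : (1-c)^t ≤ Real.exp (-(t:ℝ)/(Real.exp 1 * n)) := by
    calc (1-c)^t ≤ (1-c')^t := pow_le_pow_left₀ (by rw [hc]; linarith) (by linarith) t
      _ ≤ (Real.exp (-c'))^t := by
          apply pow_le_pow_left₀ (by linarith) ?_ t
          have := Real.add_one_le_exp (-c')
          linarith
      _ = Real.exp ((t:ℕ) * (-c')) := (Real.exp_nat_mul _ t).symm
      _ = Real.exp (-(t:ℝ)/(Real.exp 1 * n)) := by rw [hc']; congr 1; ring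
  have hD := D_bound hn t
  rw [← hc] at hD
  have hfin : ∑ x : Fin n → Bool, eaDist n (oneMax n) t x * ((n:ℝ) - oneMax n x)
      = (n:ℝ) - ∑ x : Fin n → Bool, eaDist n (oneMax n) t x * (oneMax n x : ℝ) := by
    have h : ∀ x : Fin n → Bool, eaDist n (oneMax n) t x * ((n:ℝ) - oneMax n x)
        = eaDist n (oneMax n) t x * (n:ℝ) - eaDist n (oneMax n) t x * (oneMax n x : ℝ) := by
      intro x; ring
    rw [Finset.sum_congr rfl (fun x _ => h x), Finset.sum_sub_distrib,
      ← Finset.sum_mul, sum_eaDist, one_mul]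
  rw [hfin] at hD
  have hhalfn : (0:ℝ) ≤ (n:ℝ)/2 := by positivity
  have key : (1-c)^t * ((n:ℝ)/2) ≤ Real.exp (-(t:ℝ)/(Real.exp 1 * n)) * ((n:ℝ)/2) :=
    mul_le_mul_of_nonneg_right hpow hhalfn
  nlinarith [hD, key]
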